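/- arXiv:2107.08615 — 6 statements merged into one kernel-verified Lean document; each statement's English description precedes it below -/
import Mathlib

section
/- Let T be a string of length n and T' obtained from T by a single character substitution. Then δ(T') ≤ δ(T) + 1, where δ(S) = max_{1 ≤ k ≤ |S|} Substr(S,k)/k. -/
/-- `substrCount T k` is the number of distinct length-`k` (contiguous) substrings of `T`. -/
def substrCount {α : Type*} [DecidableEq α] (T : List α) (k : ℕ) : ℕ :=
  ((Finset.range (T.length - k + 1)).image fun j => (T.drop j).take k).card

/-- Substring complexity `δ(T) = max_{1 ≤ k ≤ |T|} Substr(T,k)/k`. -/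
def delta {α : Type*} [DecidableEq α] (T : List α) : NNRat :=
  (Finset.Icc 1 T.length).sup fun k => (substrCount T k : NNRat) / (k : NNRat)

-- aux lemmas
lemma take_drop_agree {α : Type*} (T T' : List α) (i j k : ℕ)
    (hagree : ∀ m, m ≠ i → T[m]? = T'[m]?)
    (h : i < j ∨ j + k ≤ i) :
    (T'.drop j).take k = (T.drop j).take k := by
  apply List.ext_getElem?
  intro m
  rw [List.getElem?_take, List.getElem?_take]
  split
  · rename_i hm
    rw [List.getElem?_drop, List.getElem?_drop]
    refine (hagree _ ?_).symm
    rcases h with h | h <;> omega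
  · rfl

lemma substrCount_le {α : Type*} [DecidableEq α] (T T' : List α) (i k : ℕ)
    (hlen : T.length = T'.length)
    (hagree : ∀ m, m ≠ i → T[m]? = T'[m]?) :
    substrCount T' k ≤ substrCount T k + k := by
  classical
  unfold substrCount
  set S := Finset.range (T'.length - k + 1)
  have hsplit : S = S.filter (fun j => j ≤ i ∧ i < j + k) ∪ S.filter (fun j => ¬(j ≤ i ∧ i < j + k)) :=
    (Finset.filter_union_filter_not_eq _ S).symm
  calc ((S.image fun j => (T'.drop j).take k)).card
      ≤ ((S.filter (fun j => j ≤ i ∧ i < j + k)).image (fun j => (T'.drop j).take k)).card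
        + ((S.filter (fun j => ¬(j ≤ i ∧ i < j + k))).image (fun j => (T'.drop j).take k)).card := by
        have h2 := Finset.card_union_le ((S.filter (fun j => j ≤ i ∧ i < j + k)).image (fun j => (T'.drop j).take k)) ((S.filter (fun j => ¬(j ≤ i ∧ i < j + k))).image (fun j => (T'.drop j).take k))
        rw [← Finset.image_union, ← hsplit] at h2
        exact h2
    _ ≤ k + substrCount T k := by
        refine Nat.add_le_add ?_ ?_
        · calc _ ≤ (S.filter (fun j => j ≤ i ∧ i < j + k)).card := Finset.card_image_le
            _ ≤ (Finset.range k).card := by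
                apply Finset.card_le_card_of_injOn (fun j => i - j)
                · intro j hj
                  simp only [Finset.coe_filter, Finset.mem_coe, Finset.mem_filter, Set.mem_setOf_eq] at hj
                  simp only [Finset.mem_coe, Finset.mem_range]
                  omega
                · intro a ha b hb hab
                  simp only [Finset.coe_filter, Set.mem_setOf_eq] at ha hb
                  simp only at hab
                  omega
            _ = k := Finset.card_range k
        · apply Finset.card_le_card
          intro x hx
          simp only [substrCount, Finset.mem_image, Finset.mem_filter, Finset.mem_range, S] at hx ⊢
          obtain ⟨j, ⟨hj, hj2⟩, rfl⟩ := hx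
          refine ⟨j, by omega, ?_⟩
          exact (take_drop_agree T T' i j k hagree (by omega)).symm
    _ = _ := Nat.add_comm _ _

/-- If `T'` is obtained from `T` by a single character substitution, then
`δ(T') ≤ δ(T) + 1`. -/
theorem delta_substitution_le {α : Type*} [DecidableEq α]
    (T T' : List α) (n i : ℕ) (hT : T.length = n) (hT' : T'.length = n) (hi : i < n)
    (hagree : ∀ j, j ≠ i → T[j]? = T'[j]?) (hdiff : T[i]? ≠ T'[i]?) :
    delta T' ≤ delta T + 1 := by
  unfold delta
  apply Finset.sup_le
  intro k hk
  rw [Finset.mem_Icc, hT'] at hk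
  have hk1 : (1 : NNRat) ≤ (k : NNRat) := by exact_mod_cast hk.1
  have hkpos : (0 : NNRat) < (k : NNRat) := lt_of_lt_of_le one_pos hk1
  have hcount : substrCount T' k ≤ substrCount T k + k :=
    substrCount_le T T' i k (by omega) hagree
  have h1 : ((substrCount T' k : NNRat)) / k ≤ ((substrCount T k + k : ℕ) : NNRat) / k := by
    have : (substrCount T' k : NNRat) ≤ ((substrCount T k + k : ℕ) : NNRat) := by exact_mod_cast hcount
    exact div_le_div_of_nonneg_right this hkpos.le
  refine h1.trans ?_
  push_cast
  rw [add_div, div_self hkpos.ne']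
  refine add_le_add_left ?_ 1
  apply Finset.le_sup (f := fun k => (substrCount T k : NNRat) / (k : NNRat))
  rw [Finset.mem_Icc, hT]
  exact hk
end

section
/- Let T be a string of length n and T' obtained from T by inserting a single character at an arbitrary position (so |T'| = n+1). Then δ(T') ≤ δ(T) + 1. -/
lemma substrCount_insert_le {α : Type*} [DecidableEq α]
    (T : List α) (j k : ℕ) (c : α) (hj : j ≤ T.length) (hk : k ≤ T.length) :
    substrCount (T.take j ++ c :: T.drop j) k ≤ substrCount T k + k := by
  set T' := T.take j ++ c :: T.drop j with hT'
  have hlen : T'.length = T.length + 1 := by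
    simp [hT']; omega
  have hsub : ((Finset.range (T'.length - k + 1)).image fun i => (T'.drop i).take k)
      ⊆ ((Finset.range (T.length - k + 1)).image fun i => (T.drop i).take k)
        ∪ ((Finset.Icc (j + 1 - k) j).image fun i => (T'.drop i).take k) := by
    intro s hs
    simp only [Finset.mem_image, Finset.mem_range] at hs
    obtain ⟨i, hi, rfl⟩ := hs
    rw [hlen] at hi
    by_cases hcase : j + 1 - k ≤ i ∧ i ≤ j
    · exact Finset.mem_union_right _ (Finset.mem_image.2 ⟨i, Finset.mem_Icc.2 hcase, rfl⟩)
    · apply Finset.mem_union_left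
      rcases (by omega : i + k ≤ j ∨ j + 1 ≤ i) with h | h
      · refine Finset.mem_image.2 ⟨i, Finset.mem_range.2 (by omega), ?_⟩
        have key : ∀ (L : List α), (L.take (i+k)).drop i = (L.drop i).take k := by
          intro L; rw [List.drop_take]; congr 1; omega
        rw [← key, ← key]
        congr 1
        rw [hT', List.take_append_of_le_length (by simp; omega), List.take_take,
          Nat.min_eq_left (by omega : i + k ≤ j)]
      · refine Finset.mem_image.2 ⟨i - 1, Finset.mem_range.2 (by omega), ?_⟩
        have hd : T'.drop i = T.drop (i - 1) := by
          rw [hT', List.drop_append, List.drop_eq_nil_of_le (by simp; omega),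
            List.nil_append]
          have h2 : i - (T.take j).length = (i - j - 1) + 1 := by simp; omega
          rw [h2, List.drop_succ_cons, List.drop_drop]
          congr 1; omega
        rw [hd]
  calc substrCount T' k ≤ _ := Finset.card_le_card hsub
    _ ≤ _ + _ := Finset.card_union_le _ _
    _ ≤ substrCount T k + k := by
        refine Nat.add_le_add le_rfl ?_
        refine (Finset.card_image_le).trans ?_
        rw [Nat.card_Icc]; omega


/-- If `T'` is obtained from `T` by inserting a single character `c` at an arbitrary
position `j` (so `|T'| = |T| + 1`), then `δ(T') ≤ δ(T) + 1`. -/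
theorem delta_insertion_le {α : Type*} [DecidableEq α]
    (T T' : List α) (j : ℕ) (c : α) (hj : j ≤ T.length)
    (hT' : T' = T.take j ++ c :: T.drop j) :
    delta T' ≤ delta T + 1 := by
  have hlen : T'.length = T.length + 1 := by
    simp [hT']; omega
  rw [delta, Finset.sup_le_iff]
  intro k hk
  rw [Finset.mem_Icc, hlen] at hk
  have hk0 : (k : NNRat) ≠ 0 := by
    exact_mod_cast (by omega : k ≠ 0)
  by_cases hkn : k ≤ T.length
  · have h := substrCount_insert_le T j k c hj hkn
    rw [← hT'] at h
    have h1 : (substrCount T k : NNRat) / k ≤ delta T :=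
      Finset.le_sup (f := fun k => (substrCount T k : NNRat) / (k : NNRat)) (Finset.mem_Icc.2 ⟨hk.1, hkn⟩)
    calc (substrCount T' k : NNRat) / k ≤ ((substrCount T k + k : ℕ) : NNRat) / k := by
          gcongr
      _ = (substrCount T k : NNRat) / k + 1 := by
          push_cast; rw [add_div, div_self hk0]
      _ ≤ delta T + 1 := by gcongr
  · have hk' : k = T.length + 1 := by omega
    have hc : substrCount T' k ≤ 1 := by
      rw [substrCount, hlen, hk']
      exact (Finset.card_image_le).trans (by simp)
    calc (substrCount T' k : NNRat) / k ≤ 1 / k := by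
          gcongr; exact_mod_cast hc
      _ ≤ 1 := by
          rw [div_le_one (by positivity)]
          exact_mod_cast (by omega : 1 ≤ k)
      _ ≤ delta T + 1 := le_add_self
end

section
/- Let T be a string of length n ≥ 2 and T' obtained from T by deleting a single character (so |T'| = n-1). Then for every 1 ≤ k ≤ n-1, Substr(T',k) ≤ Substr(T,k) + (k-1), and consequently δ(T') ≤ δ(T) + 1. -/
/-- If `T` has length `n ≥ 2` and `T'` is obtained from `T` by deleting a single
character (so `|T'| = n - 1`), then for every `1 ≤ k ≤ n - 1` we have
`Substr(T',k) ≤ Substr(T,k) + (k - 1)`, and consequently `δ(T') ≤ δ(T) + 1`. -/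
theorem deletion_bounds {α : Type*} [DecidableEq α]
    (T T' : List α) (i : ℕ) (hlen : 2 ≤ T.length) (hi : i < T.length)
    (hT' : T' = T.take i ++ T.drop (i + 1)) :
    (∀ k, 1 ≤ k → k ≤ T.length - 1 → substrCount T' k ≤ substrCount T k + (k - 1)) ∧
      delta T' ≤ delta T + 1 := by
  have htakelen : (T.take i).length = i := by simp [Nat.min_eq_left hi.le]
  have hn : T'.length = T.length - 1 := by
    subst hT'; simp only [List.length_append, List.length_take, List.length_drop]
    omega
  have key : ∀ k, 1 ≤ k → k ≤ T.length - 1 →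
      substrCount T' k ≤ substrCount T k + (k - 1) := by
    intro k hk1 hk2
    classical
    set f : ℕ → List α := fun j => (T.drop j).take k with hf
    set g : ℕ → List α := fun j => (T'.drop j).take k with hg
    set S : Finset (List α) := (Finset.range (T.length - k + 1)).image f with hS
    set B : Finset (List α) := (Finset.Ico (i - (k - 1)) i).image g with hB
    have hsub : (Finset.range (T'.length - k + 1)).image g ⊆ S ∪ B := by
      intro x hx
      obtain ⟨j, hj, rfl⟩ := Finset.mem_image.mp hx
      rw [Finset.mem_range] at hj
      rcases le_or_gt (j + k) i with hji | hji
      · -- fully left of deletion point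
        refine Finset.mem_union_left _ (Finset.mem_image.mpr ⟨j, ?_, ?_⟩)
        · rw [Finset.mem_range]; omega
        · have h1 : T'.take i = T.take i := by
            rw [hT']; exact List.take_left' htakelen
          have h2 : g j = ((T'.take i).drop j).take k := by
            rw [hg]
            simp only [List.drop_take, List.take_take]
            congr 1; omega
          have h3 : f j = ((T.take i).drop j).take k := by
            rw [hf]
            simp only [List.drop_take, List.take_take]
            congr 1; omega
          rw [h3, ← h1, ← h2]
      · rcases le_or_gt i j with hij | hij
        · -- fully right of deletion point
          refine Finset.mem_union_left _ (Finset.mem_image.mpr ⟨j + 1, ?_, ?_⟩)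
          · rw [Finset.mem_range]; omega
          · have h4 : T'.drop j = T.drop (j + 1) := by
              rw [hT', List.drop_append, List.drop_drop,
                htakelen]
              have : (T.take i).drop j = [] := by
                apply List.drop_eq_nil_of_le; omega
              rw [this, List.nil_append]
              congr 1; omega
            show (T.drop (j+1)).take k = (T'.drop j).take k
            rw [h4]
        · -- spans the deletion point
          refine Finset.mem_union_right _ (Finset.mem_image.mpr ⟨j, ?_, rfl⟩)
          rw [Finset.mem_Ico]; omega
    calc substrCount T' k ≤ (S ∪ B).card := Finset.card_le_card hsub
      _ ≤ S.card + B.card := Finset.card_union_le _ _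
      _ ≤ substrCount T k + (k - 1) := by
          refine Nat.add_le_add le_rfl ?_
          calc B.card ≤ (Finset.Ico (i - (k - 1)) i).card := Finset.card_image_le
            _ = i - (i - (k - 1)) := Nat.card_Ico _ _
            _ ≤ k - 1 := by omega
  refine ⟨key, ?_⟩
  rw [delta, hn]
  apply Finset.sup_le
  intro k hk
  rw [Finset.mem_Icc] at hk
  obtain ⟨hk1, hk2⟩ := hk
  have hkpos : (0 : NNRat) < (k : NNRat) := by exact_mod_cast hk1
  have h1 : (substrCount T' k : NNRat) / k ≤
      ((substrCount T k : NNRat) + ((k - 1 : ℕ) : NNRat)) / k := by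
    apply div_le_div_of_nonneg_right _ hkpos.le
    · exact_mod_cast key k hk1 hk2
  refine h1.trans ?_
  rw [add_div]
  have h2 : (substrCount T k : NNRat) / k ≤ delta T := by
    apply Finset.le_sup (f := fun k => (substrCount T k : NNRat) / (k : NNRat))
    rw [Finset.mem_Icc]; omega
  have h3 : ((k - 1 : ℕ) : NNRat) / k ≤ 1 := by
    rw [div_le_one hkpos]
    exact_mod_cast Nat.sub_le k 1
  exact add_le_add h2 h3
end

section
/- For any nonempty string T, the smallest string attractor size satisfies γ(T) ≥ δ(T), i.e., for every k with 1 ≤ k ≤ |T|, the number of distinct length-k substrings of T is at most k·γ(T). -/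
/-- `Γ` is a string attractor for `T` (positions 0-indexed). -/
def IsAttractor {α : Type*} (T : List α) (Γ : Finset ℕ) : Prop :=
  ∀ j k : ℕ, 0 < k → j + k ≤ T.length →
    ∃ j', j' + k ≤ T.length ∧ (T.drop j').take k = (T.drop j).take k ∧
      ∃ p ∈ Γ, j' ≤ p ∧ p < j' + k

/-- `gamma T` is the smallest size of a string attractor for `T`. -/
noncomputable def gamma {α : Type*} (T : List α) : ℕ :=
  sInf {m | ∃ Γ : Finset ℕ, IsAttractor T Γ ∧ Γ.card = m}

theorem count_le_attr {α : Type*} [DecidableEq α] (T : List α) (Γ : Finset ℕ)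
    (hΓ : IsAttractor T Γ) (k : ℕ) (hk : 1 ≤ k) (hkT : k ≤ T.length) :
    substrCount T k ≤ k * Γ.card := by
  classical
  unfold substrCount
  set S := (Finset.range (T.length - k + 1)).image fun j => (T.drop j).take k with hS
  have key : ∀ s : List α, ∃ q : ℕ × ℕ, s ∈ S → q.1 ∈ Γ ∧ q.2 < k ∧ (T.drop (q.1 - q.2)).take k = s := by
    intro s
    by_cases hs : s ∈ S
    swap
    · exact ⟨(0, 0), fun h => absurd h hs⟩
    · simp only [hS, Finset.mem_image, Finset.mem_range] at hs
      obtain ⟨j, hj, rfl⟩ := hs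
      have hjk : j + k ≤ T.length := by omega
      obtain ⟨j', hj', heq, p, hp, hle, hlt⟩ := hΓ j k hk hjk
      exact ⟨(p, p - j'), fun _ => ⟨hp, by omega,
        by rw [show p - (p - j') = j' by omega]; exact heq⟩⟩
  choose f hf using key
  have hinj : ∀ a ∈ S, ∀ b ∈ S, f a = f b → a = b := by
    intro s hs t ht h
    rw [← (hf s hs).2.2, ← (hf t ht).2.2, h]
  calc S.card ≤ (Γ ×ˢ Finset.range k).card := by
        apply Finset.card_le_card_of_injOn f _ hinj
        intro s hs
        exact Finset.mem_product.2 ⟨(hf s hs).1, Finset.mem_range.2 (hf s hs).2.1⟩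
    _ = k * Γ.card := by rw [Finset.card_product, Finset.card_range, Nat.mul_comm]

/-- For any nonempty string `T`, `γ(T) ≥ δ(T)`: for every `1 ≤ k ≤ |T|` the number of
distinct length-`k` substrings is at most `k · γ(T)`, and hence `δ(T) ≤ γ(T)`. -/
theorem gamma_ge_delta {α : Type*} [DecidableEq α] (T : List α) (hT : T ≠ []) :
    (∀ k, 1 ≤ k → k ≤ T.length → substrCount T k ≤ k * gamma T) ∧
      delta T ≤ (gamma T : NNRat) := by
  classical
  have hne : {m | ∃ Γ : Finset ℕ, IsAttractor T Γ ∧ Γ.card = m}.Nonempty := by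
    refine ⟨(Finset.range T.length).card, Finset.range T.length, ?_, rfl⟩
    intro j k hk hjk
    exact ⟨j, hjk, rfl, j, Finset.mem_range.2 (by omega), le_rfl, by omega⟩
  obtain ⟨Γ, hΓ, hcard⟩ := Nat.sInf_mem hne
  have main : ∀ k, 1 ≤ k → k ≤ T.length → substrCount T k ≤ k * gamma T := by
    intro k hk hkT
    have := count_le_attr T Γ hΓ k hk hkT
    rwa [hcard] at this
  refine ⟨main, ?_⟩
  rw [delta]
  apply Finset.sup_le
  intro k hk
  rw [Finset.mem_Icc] at hk
  have hk0 : (k : NNRat) ≠ 0 := by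
    simp only [ne_eq, Nat.cast_eq_zero]; omega
  rw [div_le_iff₀ (lt_of_le_of_ne zero_le (Ne.symm hk0))]
  have := main k hk.1 hk.2
  calc (substrCount T k : NNRat) ≤ ((k * gamma T : ℕ) : NNRat) := by exact_mod_cast this
    _ = (gamma T : NNRat) * k := by push_cast; ring
end

section
/- Let γ(T) denote the smallest string attractor size. There exists a string T of length n (for infinitely many n) and a string T' with edit distance 1 from T such that γ(T')/γ(T) ≥ 2 - o(1); concretely, for T = a^k x a^{k+1} #_1 a^{k-1} x a #_2 a^{k-2} x a^2 #_3 ⋯ #_k x a^k over an alphabet with k+2 distinct characters {a, x, #_1,…,#_k}, we have γ(T) = k+2, while substituting the first occurrence of x by a new character b yields T' with γ(T') = 2k+2. -/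
/-- The string `T = a^k x a^{k+1} #_1 a^{k-1} x a #_2 a^{k-2} x a^2 #_3 ⋯ #_k x a^k`
over the alphabet `{a, x, #_1, …, #_k}`, encoded over `ℕ` with `a = 0`, `x = 1`,
`#_j = 2 + j` (so `b = 2` is a fresh character). -/
def attrT (k : ℕ) : List ℕ :=
  List.replicate k 0 ++ [1] ++ List.replicate (k + 1) 0 ++
    ((List.range k).flatMap fun j =>
      [3 + j] ++ List.replicate (k - 1 - j) 0 ++ [1] ++ List.replicate (j + 1) 0)



namespace Attr

def N (k : ℕ) : ℕ := 2*k+2 + k*(k+2)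
def P (k q : ℕ) : ℕ := 2*k+2 + q*(k+2)
def X (k q : ℕ) : ℕ := P k q + (k - q)

def f (k i : ℕ) : ℕ :=
  if i < k then 0
  else if i = k then 1
  else if i < 2*k+2 then 0
  else if (i - (2*k+2)) % (k+2) = 0 then 3 + (i - (2*k+2)) / (k+2)
  else if (i - (2*k+2)) % (k+2) = k - (i - (2*k+2)) / (k+2) then 1
  else 0

lemma f_lt {k i : ℕ} (h : i < k) : f k i = 0 := by simp [f, h]

lemma f_k (k : ℕ) : f k k = 1 := by simp [f]

lemma f_mid {k i : ℕ} (h1 : k < i) (h2 : i < 2*k+2) : f k i = 0 := by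
  simp only [f]
  rw [if_neg (by omega), if_neg (by omega), if_pos h2]

lemma f_block {k q r : ℕ} (hq : q < k) (hr : r < k+2) :
    f k (P k q + r) = if r = 0 then 3+q else if r = k - q then 1 else 0 := by
  have h1 : P k q + r - (2*k+2) = q*(k+2) + r := by simp [P]; omega
  have h2 : (q*(k+2) + r) % (k+2) = r := by
    rw [Nat.mul_comm, Nat.mul_add_mod, Nat.mod_eq_of_lt hr]
  have h3 : (q*(k+2) + r) / (k+2) = q := by
    rw [Nat.mul_comm, Nat.mul_add_div (by omega), Nat.div_eq_of_lt hr]; omega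
  have hge : ¬ (P k q + r < k) := by simp [P]; omega
  have hne : ¬ (P k q + r = k) := by simp [P]; omega
  have hge2 : ¬ (P k q + r < 2*k+2) := by simp [P]; omega
  simp only [f, if_neg hge, if_neg hne, if_neg hge2, h1, h2, h3]

lemma exists_block {k i : ℕ} (h1 : 2*k+2 ≤ i) (h2 : i < N k) :
    ∃ q < k, ∃ r < k+2, i = P k q + r := by
  set m := i - (2*k+2) with hm
  have hdm := Nat.div_add_mod' m (k+2)
  have hmod : m % (k+2) < k+2 := Nat.mod_lt _ (by omega)
  have hmk : m < k*(k+2) := by simp [N] at h2; omega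
  have hq : m / (k+2) < k := by
    by_contra hc
    push_neg at hc
    have : k*(k+2) ≤ (m/(k+2))*(k+2) := Nat.mul_le_mul_right _ hc
    omega
  exact ⟨m/(k+2), hq, m%(k+2), hmod, by simp [P]; omega⟩


lemma range'_split (s m n : ℕ) : List.range' s (m+n) = List.range' s m ++ List.range' (s+m) n := by
  rw [← List.range'_append]
  simp

lemma map_zero {g : ℕ → ℕ} {a b : ℕ} (h : ∀ i, a ≤ i → i < a+b → g i = 0) :
    (List.range' a b).map g = List.replicate b 0 := by
  rw [List.eq_replicate_iff]
  refine ⟨by simp, ?_⟩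
  intro c hc
  simp only [List.mem_map, List.mem_range'_1] at hc
  obtain ⟨i, ⟨h1, h2⟩, rfl⟩ := hc
  exact h i h1 h2

lemma block_map {k q : ℕ} (hq : q < k) :
    (List.range' (P k q) (k+2)).map (f k) =
      [3 + q] ++ List.replicate (k - 1 - q) 0 ++ [1] ++ List.replicate (q + 1) 0 := by
  have e1 : k+2 = 1 + ((k-1-q) + (1 + (q+1))) := by omega
  rw [e1, range'_split _ 1, range'_split _ (k-1-q), range'_split _ 1]
  have e2 : P k q + 1 + (k-1-q) = P k q + (k-q) := by omega
  rw [e2]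
  simp only [List.range'_one, List.map_append, List.map_cons, List.map_nil]
  have v1 : f k (P k q) = 3 + q := by
    have := f_block (r := 0) hq (by omega); simpa using this
  have v2 : f k (P k q + (k-q)) = 1 := by
    have := f_block (r := k-q) hq (by omega)
    rw [this, if_neg (by omega), if_pos rfl]
  have v3 : (List.range' (P k q + 1) (k-1-q)).map (f k) = List.replicate (k-1-q) 0 := by
    apply map_zero
    intro i h1 h2
    obtain ⟨r, hr, rfl⟩ : ∃ r, (1 ≤ r ∧ r ≤ k - 1 - q) ∧ i = P k q + r :=
      ⟨i - P k q, by omega, by omega⟩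
    rw [f_block hq (by omega), if_neg (by omega), if_neg (by omega)]
  have v4 : (List.range' (P k q + (k-q) + 1) (q+1)).map (f k) = List.replicate (q+1) 0 := by
    apply map_zero
    intro i h1 h2
    obtain ⟨r, hr, rfl⟩ : ∃ r, (k - q + 1 ≤ r ∧ r ≤ k + 1) ∧ i = P k q + r :=
      ⟨i - P k q, by omega, by omega⟩
    rw [f_block hq (by omega), if_neg (by omega), if_neg (by omega)]
  rw [v1, v2, v3, v4]
  simp [List.append_assoc]

lemma flatMap_eq (k : ℕ) : ∀ m, m ≤ k →
    ((List.range m).flatMap fun j =>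
      [3 + j] ++ List.replicate (k - 1 - j) 0 ++ [1] ++ List.replicate (j + 1) 0) =
    (List.range' (2*k+2) (m*(k+2))).map (f k) := by
  intro m
  induction m with
  | zero => simp
  | succ m ih =>
    intro hm
    rw [List.range_succ, List.flatMap_append, ih (by omega)]
    have e : (m+1)*(k+2) = m*(k+2) + (k+2) := by ring
    rw [e, range'_split, List.map_append]
    have e2 : 2*k+2 + m*(k+2) = P k m := rfl
    rw [e2, block_map (show m < k by omega)]
    simp

lemma attrT_eq (k : ℕ) : attrT k = (List.range (N k)).map (f k) := by
  have hpre : (List.range' 0 (2*k+2)).map (f k) =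
      List.replicate k 0 ++ [1] ++ List.replicate (k+1) 0 := by
    have e1 : 2*k+2 = k + (1 + (k+1)) := by omega
    rw [e1, range'_split, range'_split]
    simp only [List.range'_one, List.map_append, List.map_cons, List.map_nil, Nat.zero_add]
    have v1 : (List.range' 0 k).map (f k) = List.replicate k 0 :=
      map_zero (fun i _ h2 => f_lt (by omega))
    have v2 : f k k = 1 := f_k k
    have v3 : (List.range' (k+1) (k+1)).map (f k) = List.replicate (k+1) 0 :=
      map_zero (fun i h1 h2 => f_mid (by omega) (by omega))
    rw [v1, v2, v3]
    simp [List.append_assoc]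
  have hN : N k = (2*k+2) + k*(k+2) := rfl
  rw [List.range_eq_range', hN, range'_split, List.map_append, Nat.zero_add, hpre,
    attrT, ← flatMap_eq k k le_rfl]

lemma length_attrT (k : ℕ) : (attrT k).length = N k := by
  rw [attrT_eq]; simp


def f' (k i : ℕ) : ℕ := if i = k then 2 else f k i

lemma attrT'_eq (k : ℕ) : (attrT k).set k 2 = (List.range (N k)).map (f' k) := by
  rw [attrT_eq]
  apply List.ext_getElem
  · simp
  · intro i h1 h2
    simp only [List.getElem_set, List.getElem_map, List.getElem_range, f']
    by_cases h : i = k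
    · simp [h]
    · rw [if_neg (fun hh => h hh.symm), if_neg h]

lemma window_getElem {g : ℕ → ℕ} {M a len i : ℕ} (hi : i < len) (ha : a + len ≤ M) :
    ((((List.range M).map g).drop a).take len)[i]? = some (g (a+i)) := by
  have hlen : ((((List.range M).map g).drop a).take len).length = len := by
    simp; omega
  rw [List.getElem?_eq_getElem (by omega)]
  simp [List.getElem_take, List.getElem_drop]

lemma substr_of_ptwise {g : ℕ → ℕ} {M j j' len : ℕ} (hj : j + len ≤ M) (hj' : j' + len ≤ M)
    (h : ∀ i < len, g (j'+i) = g (j+i)) :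
    (((List.range M).map g).drop j').take len = (((List.range M).map g).drop j).take len := by
  apply List.ext_getElem?
  intro i
  by_cases hi : i < len
  · rw [window_getElem hi hj', window_getElem hi hj, h i hi]
  · rw [List.getElem?_eq_none, List.getElem?_eq_none] <;> simp <;> omega

lemma ptwise_of_substr {g : ℕ → ℕ} {M j j' len : ℕ} (hj : j + len ≤ M) (hj' : j' + len ≤ M)
    (h : (((List.range M).map g).drop j').take len = (((List.range M).map g).drop j).take len) :
    ∀ i < len, g (j'+i) = g (j+i) := by
  intro i hi
  have := congrArg (fun l => l[i]?) h
  simp only [window_getElem hi hj', window_getElem hi hj, Option.some.injEq] at this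
  exact this

lemma f_cases (k i : ℕ) : f k i = 0 ∨ f k i = 1 ∨ 3 ≤ f k i := by
  unfold f
  split
  · left; rfl
  split
  · right; left; rfl
  split
  · left; rfl
  split
  · right; right; exact Nat.le_add_right 3 _
  split
  · right; left; rfl
  · left; rfl

lemma f_eq_one {k i : ℕ} (hi : i < N k) (h : f k i = 1) : i = k ∨ ∃ q < k, i = X k q := by
  rcases Nat.lt_or_ge i k with hik | hik
  · rw [f_lt hik] at h; omega
  rcases Nat.eq_or_lt_of_le hik with heq | hik2
  · left; omega
  rcases Nat.lt_or_ge i (2*k+2) with him | him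
  · rw [f_mid hik2 him] at h; omega
  obtain ⟨q, hq, r, hr, rfl⟩ := exists_block him hi
  rw [f_block hq hr] at h
  right
  refine ⟨q, hq, ?_⟩
  by_cases h0 : r = 0
  · rw [if_pos h0] at h; omega
  rw [if_neg h0] at h
  by_cases h1 : r = k - q
  · rw [X, ← h1]
  · rw [if_neg h1] at h; omega

lemma f_big {k i : ℕ} (hi : i < N k) (h : 3 ≤ f k i) : ∃ q < k, i = P k q ∧ f k i = 3 + q := by
  rcases Nat.lt_or_ge i k with hik | hik
  · rw [f_lt hik] at h; omega
  rcases Nat.eq_or_lt_of_le hik with heq | hik2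
  · rw [← heq, f_k] at h; omega
  rcases Nat.lt_or_ge i (2*k+2) with him | him
  · rw [f_mid hik2 him] at h; omega
  obtain ⟨q, hq, r, hr, rfl⟩ := exists_block him hi
  rw [f_block hq hr] at h ⊢
  by_cases h0 : r = 0
  · subst h0; exact ⟨q, hq, rfl, by simp⟩
  rw [if_neg h0] at h
  by_cases h1 : r = k - q
  · rw [if_pos h1] at h; omega
  · rw [if_neg h1] at h; omega

lemma f_at_X {k q : ℕ} (hq : q < k) : f k (X k q) = 1 := by
  rw [X, f_block hq (by omega), if_neg (by omega), if_pos rfl]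

lemma f_at_P {k q : ℕ} (hq : q < k) : f k (P k q) = 3 + q := by
  have := f_block (r := 0) hq (by omega)
  simpa using this

lemma N_eq (k : ℕ) (hk : 1 ≤ k) : N k = P k (k-1) + (k+2) := by
  obtain ⟨k', rfl⟩ : ∃ k', k = k'+1 := ⟨k-1, by omega⟩
  have e : (k'+1)*(k'+1+2) = k'*(k'+1+2) + (k'+1+2) := by ring
  have e2 : (k'+1-1)*(k'+1+2) = k'*(k'+1+2) := by norm_num
  simp only [N, P]
  omega

lemma P_le_P {k a b : ℕ} (h : a ≤ b) : P k a ≤ P k b := by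
  simp only [P]
  have := Nat.mul_le_mul_right (k+2) h
  omega

lemma zero_run_gen {k j' : ℕ} {g : ℕ → ℕ} (hk : 1 ≤ k)
    (hgk : g k ≠ 0) (hgP : ∀ q < k, g (P k q) ≠ 0) (hgX : ∀ q < k, g (X k q) ≠ 0)
    (hb : j' + (k+1) ≤ N k) (hz : ∀ i < k+1, g (j'+i) = 0) : j' = k+1 := by
  have hN : N k = P k (k-1) + (k+2) := N_eq k hk
  rcases Nat.lt_or_ge j' (k+1) with h1 | h1
  · exfalso
    have := hz (k - j') (by omega)
    rw [show j' + (k - j') = k by omega] at this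
    exact hgk this
  rcases Nat.eq_or_lt_of_le h1 with heq | h2
  · omega
  rcases Nat.lt_or_ge j' (2*k+2) with h3 | h3
  · exfalso
    have hP0 : P k 0 = 2*k+2 := by simp [P]
    have := hz (2*k+2 - j') (by omega)
    rw [show j' + (2*k+2 - j') = 2*k+2 by omega, ← hP0] at this
    exact hgP 0 (by omega) this
  · exfalso
    obtain ⟨q, hq, r, hr, rfl⟩ := exists_block h3 (by omega)
    rcases Nat.eq_zero_or_pos r with h0 | h0
    · subst h0
      exact hgP q hq (by simpa using hz 0 (by omega))
    rcases le_or_gt r (k - q) with h4 | h4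
    · have := hz (k - q - r) (by omega)
      rw [show P k q + r + (k - q - r) = X k q by simp [X]; omega] at this
      exact hgX q hq this
    · have hq1 : q + 1 < k := by
        rcases Nat.lt_or_ge (q+1) k with h5 | h5
        · exact h5
        · exfalso
          have hqe : q = k - 1 := by omega
          subst hqe
          omega
      have := hz (k + 2 - r) (by omega)
      rw [show P k q + r + (k + 2 - r) = P k (q+1) by simp [P]; ring_nf; omega] at this
      exact hgP (q+1) hq1 this


def GT (k : ℕ) : Finset ℕ := insert k (insert (2*k+1) ((Finset.range k).image (P k)))

lemma mem_GT {k γ : ℕ} : γ ∈ GT k ↔ γ = k ∨ γ = 2*k+1 ∨ ∃ q < k, γ = P k q := by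
  simp only [GT, Finset.mem_insert, Finset.mem_image, Finset.mem_range]
  constructor
  · rintro (h | h | ⟨q, hq, rfl⟩)
    · exact Or.inl h
    · exact Or.inr (Or.inl h)
    · exact Or.inr (Or.inr ⟨q, hq, rfl⟩)
  · rintro (h | h | ⟨q, hq, rfl⟩)
    · exact Or.inl h
    · exact Or.inr (Or.inl h)
    · exact Or.inr (Or.inr ⟨q, hq, rfl⟩)

lemma P_inj (k : ℕ) : Function.Injective (P k) := by
  intro a b hab
  simp only [P] at hab
  have := Nat.eq_of_mul_eq_mul_right (show 0 < k+2 by omega) (by omega : a*(k+2) = b*(k+2))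
  exact this

lemma card_GT {k : ℕ} (hk : 1 ≤ k) : (GT k).card = k + 2 := by
  have h1 : (2*k+1) ∉ (Finset.range k).image (P k) := by
    simp only [Finset.mem_image, Finset.mem_range]
    rintro ⟨q, hq, he⟩
    simp only [P] at he
    omega
  have h2 : k ∉ insert (2*k+1) ((Finset.range k).image (P k)) := by
    simp only [Finset.mem_insert, Finset.mem_image, Finset.mem_range]
    rintro (h | ⟨q, hq, he⟩)
    · omega
    · simp only [P] at he; omega
  rw [GT, Finset.card_insert_of_notMem h2, Finset.card_insert_of_notMem h1,
    Finset.card_image_of_injective _ (P_inj k), Finset.card_range]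

lemma gapT {k j len : ℕ} (hk : 1 ≤ k) (hlen : k+2 ≤ len) (hb : j + len ≤ N k) :
    ∃ γ ∈ GT k, j ≤ γ ∧ γ < j + len := by
  rcases le_or_gt j k with h1 | h1
  · exact ⟨k, mem_GT.mpr (Or.inl rfl), h1, by omega⟩
  rcases le_or_gt j (2*k+1) with h2 | h2
  · exact ⟨2*k+1, mem_GT.mpr (Or.inr (Or.inl rfl)), h2, by omega⟩
  obtain ⟨q, hq, r, hr, hjQ⟩ := exists_block (i := j) (show 2*k+2 ≤ j by omega)
    (show j < N k by omega)
  subst hjQ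
  rcases Nat.eq_zero_or_pos r with h0 | h0
  · exact ⟨P k q, mem_GT.mpr (Or.inr (Or.inr ⟨q, hq, rfl⟩)), by omega, by omega⟩
  · have hq1 : q + 1 < k := by
      by_contra hc
      have hqe : q = k - 1 := by omega
      have := N_eq k hk
      subst hqe
      omega
    refine ⟨P k (q+1), mem_GT.mpr (Or.inr (Or.inr ⟨q+1, hq1, rfl⟩)), ?_, ?_⟩ <;>
      · have e : P k (q+1) = P k q + (k+2) := by simp [P]; ring
        omega

lemma attr_T {k : ℕ} (hk : 1 ≤ k) : IsAttractor (attrT k) (GT k) := by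
  rw [attrT_eq]
  intro j len hpos hble
  simp only [List.length_map, List.length_range] at hble ⊢
  by_cases hcov : ∃ p ∈ GT k, j ≤ p ∧ p < j + len
  · exact ⟨j, hble, rfl, hcov⟩
  push_neg at hcov
  have havoid : ∀ γ, γ ∈ GT k → ¬ (j ≤ γ ∧ γ < j + len) := by
    intro γ hγ hc
    exact absurd (hcov γ hγ hc.1) (by omega)
  have hlen : len ≤ k + 1 := by
    by_contra hc
    obtain ⟨γ, hγ, h1, h2⟩ := gapT hk (show k+2 ≤ len by omega) hble
    exact havoid γ hγ ⟨h1, h2⟩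
  have hval : ∀ i < len, f k (j+i) = 0 ∨ f k (j+i) = 1 := by
    intro i hi
    rcases f_cases k (j+i) with h | h | h
    · exact Or.inl h
    · exact Or.inr h
    · exfalso
      obtain ⟨q, hq, he, _⟩ := f_big (by omega) h
      exact havoid (P k q) (mem_GT.mpr (Or.inr (Or.inr ⟨q, hq, rfl⟩))) ⟨by omega, by omega⟩
  by_cases hx : ∃ t < len, f k (j+t) = 1
  · obtain ⟨t, ht, hxt⟩ := hx
    obtain ⟨q, hq, hXq⟩ : ∃ q < k, j + t = X k q := by
      rcases f_eq_one (by omega) hxt with h | h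
      · exact absurd (havoid k (mem_GT.mpr (Or.inl rfl)) ⟨by omega, by omega⟩) (by simp)
      · exact h
    simp only [X] at hXq
    have huniq : ∀ i < len, i ≠ t → f k (j+i) = 0 := by
      intro i hi hne
      rcases hval i hi with h | h
      · exact h
      exfalso
      rcases f_eq_one (by omega) h with h2 | ⟨q', hq', hXq'⟩
      · exact havoid k (mem_GT.mpr (Or.inl rfl)) ⟨by omega, by omega⟩
      simp only [X] at hXq'
      have hqq : q ≠ q' := by intro hc; subst hc; omega
      rcases Nat.lt_or_ge q q' with hlt | hge
      · have h5 : P k (q+1) ≤ P k q' := P_le_P (by omega)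
        have e : P k (q+1) = P k q + (k+2) := by simp only [P]; ring
        exact havoid (P k q') (mem_GT.mpr (Or.inr (Or.inr ⟨q', hq', rfl⟩)))
          ⟨by omega, by omega⟩
      · have hlt' : q' < q := by omega
        have h5 : P k (q'+1) ≤ P k q := P_le_P (by omega)
        have e : P k (q'+1) = P k q' + (k+2) := by simp only [P]; ring
        exact havoid (P k q) (mem_GT.mpr (Or.inr (Or.inr ⟨q, hq, rfl⟩)))
          ⟨by omega, by omega⟩
    have hjgt : P k q < j := by
      by_contra hc
      push_neg at hc
      exact havoid (P k q) (mem_GT.mpr (Or.inr (Or.inr ⟨q, hq, rfl⟩))) ⟨hc, by omega⟩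
    have ht_le : t ≤ k - q - 1 := by omega
    have hlen2 : j + len ≤ P k q + (k+2) := by
      rcases Nat.lt_or_ge (q+1) k with h5 | h5
      · by_contra hc
        push_neg at hc
        have e : P k (q+1) = P k q + (k+2) := by simp only [P]; ring
        exact havoid (P k (q+1)) (mem_GT.mpr (Or.inr (Or.inr ⟨q+1, h5, rfl⟩)))
          ⟨by omega, by omega⟩
      · have hqe : q = k - 1 := by omega
        have := N_eq k hk
        subst hqe
        omega
    refine ⟨k - t, by simp only [N]; omega, ?_, k, mem_GT.mpr (Or.inl rfl), by omega, by omega⟩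
    apply substr_of_ptwise hble (by simp only [N] at *; omega)
    intro i hi
    rcases Nat.lt_trichotomy i t with h | h | h
    · rw [huniq i hi (by omega), f_lt (by omega)]
    · subst h
      rw [show k - i + i = k by omega, f_k, hxt]
    · have e0 : f k (j+i) = 0 := huniq i hi (by omega)
      have e1 : f k (k - t + i) = 0 := f_mid (by omega) (by omega)
      rw [e0, e1]
  · push_neg at hx
    have hz : ∀ i < len, f k (j+i) = 0 := by
      intro i hi
      rcases hval i hi with h | h
      · exact h
      · exact absurd h (hx i hi)
    refine ⟨2*k+2 - len, by simp only [N]; omega, ?_, 2*k+1,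
      mem_GT.mpr (Or.inr (Or.inl rfl)), by omega, by omega⟩
    apply substr_of_ptwise hble (by simp only [N] at *; omega)
    intro i hi
    have e1 : f k (2*k+2 - len + i) = 0 := f_mid (by omega) (by omega)
    rw [hz i hi, e1]


lemma zero_run {k j' : ℕ} (hk : 1 ≤ k) (hb : j' + (k+1) ≤ N k)
    (hz : ∀ i < k+1, f k (j'+i) = 0) : j' = k+1 :=
  zero_run_gen hk (by rw [f_k]; omega) (fun q hq => by rw [f_at_P hq]; omega)
    (fun q hq => by rw [f_at_X hq]; omega) hb hz

lemma lower_T {k : ℕ} (hk : 1 ≤ k) {Γ : Finset ℕ} (hA : IsAttractor (attrT k) Γ) :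
    k + 2 ≤ Γ.card := by
  rw [attrT_eq] at hA
  have hL : ((List.range (N k)).map (f k)).length = N k := by simp
  have hNk : 2*k+2 ≤ N k := by simp only [N]; omega
  have hP : ∀ q < k, P k q ∈ Γ := by
    intro q hq
    have hPb : P k q + 1 ≤ N k := by
      have := N_eq k hk
      have := P_le_P (k := k) (show q ≤ k-1 by omega)
      omega
    obtain ⟨j', hb', heq, p, hp, hp1, hp2⟩ := hA (P k q) 1 one_pos (by rw [hL]; exact hPb)
    rw [hL] at hb'
    have hpt := ptwise_of_substr hPb hb' heq 0 one_pos
    simp only [Nat.add_zero] at hpt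
    rw [f_at_P hq] at hpt
    have hj'e : j' = P k q := by
      obtain ⟨q2, hq2, he2, hv2⟩ := f_big (k := k) (i := j') (by omega) (by omega)
      have hqe : q2 = q := by omega
      subst hqe
      exact he2
    have : p = P k q := by omega
    rwa [← this]
  have hE1 : ∃ e ∈ Γ, e ≤ k := by
    obtain ⟨j', hb', heq, p, hp, hp1, hp2⟩ := hA 0 (k+1) (by omega) (by rw [hL]; omega)
    rw [hL] at hb'
    have hpt := ptwise_of_substr (by omega) hb' heq
    have h1 : f k (j' + k) = 1 := by
      have := hpt k (by omega)
      rwa [Nat.zero_add, f_k] at this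
    rcases f_eq_one (by omega) h1 with h2 | ⟨q, hq, hXq⟩
    · have hj0 : j' = 0 := by omega
      exact ⟨p, hp, by omega⟩
    · exfalso
      simp only [X] at hXq
      have h3 := hpt q (by omega)
      rw [Nat.zero_add, f_lt hq] at h3
      have hPq : j' + q = P k q := by omega
      rw [hPq, f_at_P hq] at h3
      omega
  have hE2 : ∃ e ∈ Γ, k+1 ≤ e ∧ e ≤ 2*k+1 := by
    obtain ⟨j', hb', heq, p, hp, hp1, hp2⟩ :=
      hA (k+1) (k+1) (by omega) (by rw [hL]; omega)
    rw [hL] at hb'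
    have hpt := ptwise_of_substr (by omega) hb' heq
    have hz : ∀ i < k+1, f k (j'+i) = 0 := by
      intro i hi
      rw [hpt i hi, f_mid (by omega) (by omega)]
    have := zero_run hk hb' hz
    subst this
    exact ⟨p, hp, by omega, by omega⟩
  obtain ⟨e1, he1, he1k⟩ := hE1
  obtain ⟨e2, he2, he2a, he2b⟩ := hE2
  have hsub : insert e1 (insert e2 ((Finset.range k).image (P k))) ⊆ Γ := by
    intro y hy
    simp only [Finset.mem_insert, Finset.mem_image, Finset.mem_range] at hy
    rcases hy with rfl | rfl | ⟨q, hq, rfl⟩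
    · exact he1
    · exact he2
    · exact hP q hq
  have hcard : (insert e1 (insert e2 ((Finset.range k).image (P k)))).card = k + 2 := by
    have hP2k : ∀ q, q < k → 2*k+2 ≤ P k q := by intro q hq; simp only [P]; omega
    rw [Finset.card_insert_of_notMem, Finset.card_insert_of_notMem,
      Finset.card_image_of_injective _ (P_inj k), Finset.card_range]
    · simp only [Finset.mem_image, Finset.mem_range, not_exists]
      rintro q ⟨hq, he⟩
      have := hP2k q hq
      omega
    · simp only [Finset.mem_insert, Finset.mem_image, Finset.mem_range, not_or, not_exists]
      refine ⟨by omega, ?_⟩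
      rintro q ⟨hq, he⟩
      have := hP2k q hq
      omega
  calc k + 2 = _ := hcard.symm
    _ ≤ Γ.card := Finset.card_le_card hsub

lemma gamma_T {k : ℕ} (hk : 1 ≤ k) : gamma (attrT k) = k + 2 := by
  apply le_antisymm
  · exact Nat.sInf_le ⟨GT k, attr_T hk, card_GT hk⟩
  · refine le_csInf ⟨k+2, GT k, attr_T hk, card_GT hk⟩ ?_
    rintro m ⟨Γ, hA, rfl⟩
    exact lower_T hk hA


/-! ### The modified string T' -/

lemma f'_k (k : ℕ) : f' k k = 2 := by simp [f']

lemma f'_ne {k i : ℕ} (h : i ≠ k) : f' k i = f k i := by simp [f', h]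

lemma P_gt {k q : ℕ} : 2*k+2 ≤ P k q := by simp only [P]; omega

lemma f'_at_P {k q : ℕ} (hq : q < k) : f' k (P k q) = 3 + q := by
  rw [f'_ne (by have := P_gt (k := k) (q := q); omega), f_at_P hq]

lemma f'_at_X {k q : ℕ} (hq : q < k) : f' k (X k q) = 1 := by
  have h1 : 2*k+2 ≤ X k q := by have := P_gt (k := k) (q := q); simp only [X]; omega
  rw [f'_ne (by omega), f_at_X hq]

lemma f'_zero_of {k i : ℕ} (hi : i < N k) (h1 : i ≠ k) (h2 : ∀ q < k, i ≠ P k q)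
    (h3 : ∀ q < k, i ≠ X k q) : f' k i = 0 := by
  rw [f'_ne h1]
  rcases f_cases k i with h | h | h
  · exact h
  · rcases f_eq_one hi h with h4 | ⟨q, hq, h4⟩
    · exact absurd h4 h1
    · exact absurd h4 (h3 q hq)
  · obtain ⟨q, hq, h4, _⟩ := f_big hi h
    exact absurd h4 (h2 q hq)

def GT' (k : ℕ) : Finset ℕ :=
  insert k (insert (2*k+1) (((Finset.range k).image (P k)) ∪ ((Finset.range k).image (X k))))

lemma mem_GT' {k γ : ℕ} : γ ∈ GT' k ↔
    γ = k ∨ γ = 2*k+1 ∨ (∃ q < k, γ = P k q) ∨ (∃ q < k, γ = X k q) := by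
  simp only [GT', Finset.mem_insert, Finset.mem_union, Finset.mem_image, Finset.mem_range]
  constructor
  · rintro (h | h | ⟨q, hq, rfl⟩ | ⟨q, hq, rfl⟩)
    · exact Or.inl h
    · exact Or.inr (Or.inl h)
    · exact Or.inr (Or.inr (Or.inl ⟨q, hq, rfl⟩))
    · exact Or.inr (Or.inr (Or.inr ⟨q, hq, rfl⟩))
  · rintro (h | h | ⟨q, hq, rfl⟩ | ⟨q, hq, rfl⟩)
    · exact Or.inl h
    · exact Or.inr (Or.inl h)
    · exact Or.inr (Or.inr (Or.inl ⟨q, hq, rfl⟩))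
    · exact Or.inr (Or.inr (Or.inr ⟨q, hq, rfl⟩))

lemma P_ne_X {k q q' : ℕ} (hq' : q' < k) : P k q ≠ X k q' := by
  intro h
  simp only [X] at h
  rcases le_or_gt q q' with h1 | h1
  · have h2 : P k q ≤ P k q' := P_le_P h1
    omega
  · have h2 : P k (q'+1) ≤ P k q := P_le_P h1
    have e : P k (q'+1) = P k q' + (k+2) := by simp only [P]; ring
    omega

lemma X_injOn {k q q' : ℕ} (hq : q < k) (hq' : q' < k) (h : X k q = X k q') : q = q' := by
  rcases Nat.lt_trichotomy q q' with h1 | h1 | h1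
  · exfalso
    have h2 : P k (q+1) ≤ P k q' := P_le_P h1
    have e : P k (q+1) = P k q + (k+2) := by simp only [P]; ring
    simp only [X] at h
    omega
  · exact h1
  · exfalso
    have h2 : P k (q'+1) ≤ P k q := P_le_P h1
    have e : P k (q'+1) = P k q' + (k+2) := by simp only [P]; ring
    simp only [X] at h
    omega

lemma card_GT' {k : ℕ} (hk : 1 ≤ k) : (GT' k).card = 2*k + 2 := by
  have hXgt : ∀ q, 2*k+2 ≤ X k q := by
    intro q
    have := P_gt (k := k) (q := q)
    simp only [X]
    omega
  have hdisj : Disjoint ((Finset.range k).image (P k)) ((Finset.range k).image (X k)) := by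
    rw [Finset.disjoint_left]
    intro a ha hb
    simp only [Finset.mem_image, Finset.mem_range] at ha hb
    obtain ⟨q, hq, rfl⟩ := ha
    obtain ⟨q', hq', he⟩ := hb
    exact P_ne_X hq' he.symm
  have hXi : Set.InjOn (X k) (Finset.range k) := by
    intro a ha b hb h
    simp only [Finset.coe_range, Set.mem_Iio] at ha hb
    exact X_injOn ha hb h
  have hu : (((Finset.range k).image (P k)) ∪ ((Finset.range k).image (X k))).card = 2*k := by
    rw [Finset.card_union_of_disjoint hdisj, Finset.card_image_of_injective _ (P_inj k),
      Finset.card_image_of_injOn hXi, Finset.card_range]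
    omega
  have h1 : (2*k+1) ∉ ((Finset.range k).image (P k)) ∪ ((Finset.range k).image (X k)) := by
    simp only [Finset.mem_union, Finset.mem_image, Finset.mem_range]
    rintro (⟨q, hq, he⟩ | ⟨q, hq, he⟩)
    · have := P_gt (k := k) (q := q); omega
    · have := hXgt q; omega
  have h2 : k ∉ insert (2*k+1)
      (((Finset.range k).image (P k)) ∪ ((Finset.range k).image (X k))) := by
    simp only [Finset.mem_insert, Finset.mem_union, Finset.mem_image, Finset.mem_range]
    rintro (h | ⟨q, hq, he⟩ | ⟨q, hq, he⟩)
    · omega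
    · have := P_gt (k := k) (q := q); omega
    · have := hXgt q; omega
  rw [GT', Finset.card_insert_of_notMem h2, Finset.card_insert_of_notMem h1, hu]

lemma gapT' {k j len : ℕ} (hk : 1 ≤ k) (hlen : k+1 ≤ len) (hb : j + len ≤ N k) :
    ∃ γ ∈ GT' k, j ≤ γ ∧ γ < j + len := by
  rcases le_or_gt j k with h1 | h1
  · exact ⟨k, mem_GT'.mpr (Or.inl rfl), h1, by omega⟩
  rcases le_or_gt j (2*k+1) with h2 | h2
  · exact ⟨2*k+1, mem_GT'.mpr (Or.inr (Or.inl rfl)), h2, by omega⟩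
  obtain ⟨q, hq, r, hr, hjQ⟩ := exists_block (i := j) (show 2*k+2 ≤ j by omega)
    (show j < N k by omega)
  subst hjQ
  rcases le_or_gt r (k - q) with h3 | h3
  · refine ⟨X k q, mem_GT'.mpr (Or.inr (Or.inr (Or.inr ⟨q, hq, rfl⟩))), ?_, ?_⟩ <;>
      · simp only [X]
        omega
  · have hq1 : q + 1 < k := by
      by_contra hc
      have hqe : q = k - 1 := by omega
      have := N_eq k hk
      subst hqe
      omega
    refine ⟨P k (q+1), mem_GT'.mpr (Or.inr (Or.inr (Or.inl ⟨q+1, hq1, rfl⟩))), ?_, ?_⟩ <;>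
      · have e : P k (q+1) = P k q + (k+2) := by simp only [P]; ring
        omega

lemma attr_T' {k : ℕ} (hk : 1 ≤ k) : IsAttractor ((attrT k).set k 2) (GT' k) := by
  rw [attrT'_eq]
  intro j len hpos hble
  simp only [List.length_map, List.length_range] at hble ⊢
  by_cases hcov : ∃ p ∈ GT' k, j ≤ p ∧ p < j + len
  · exact ⟨j, hble, rfl, hcov⟩
  push_neg at hcov
  have havoid : ∀ γ, γ ∈ GT' k → ¬ (j ≤ γ ∧ γ < j + len) := by
    intro γ hγ hc
    exact absurd (hcov γ hγ hc.1) (by omega)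
  have hlen : len ≤ k := by
    by_contra hc
    obtain ⟨γ, hγ, h1, h2⟩ := gapT' hk (show k+1 ≤ len by omega) hble
    exact havoid γ hγ ⟨h1, h2⟩
  have hz : ∀ i < len, f' k (j+i) = 0 := by
    intro i hi
    apply f'_zero_of (by omega)
    · intro hc
      exact havoid k (mem_GT'.mpr (Or.inl rfl)) ⟨by omega, by omega⟩
    · intro q hq hc
      exact havoid (P k q) (mem_GT'.mpr (Or.inr (Or.inr (Or.inl ⟨q, hq, rfl⟩))))
        ⟨by omega, by omega⟩
    · intro q hq hc
      exact havoid (X k q) (mem_GT'.mpr (Or.inr (Or.inr (Or.inr ⟨q, hq, rfl⟩))))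
        ⟨by omega, by omega⟩
  refine ⟨2*k+2 - len, by simp only [N]; omega, ?_, 2*k+1,
    mem_GT'.mpr (Or.inr (Or.inl rfl)), by omega, by omega⟩
  apply substr_of_ptwise hble (by simp only [N] at *; omega)
  intro i hi
  have e1 : f' k (2*k+2 - len + i) = 0 := by
    rw [f'_ne (by omega), f_mid (by omega) (by omega)]
  rw [hz i hi, e1]


lemma lower_T' {k : ℕ} (hk : 1 ≤ k) {Γ : Finset ℕ} (hA : IsAttractor ((attrT k).set k 2) Γ) :
    2*k + 2 ≤ Γ.card := by
  rw [attrT'_eq] at hA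
  have hL : ((List.range (N k)).map (f' k)).length = N k := by simp
  have hNk : 2*k+2 ≤ N k := by simp only [N]; omega
  have hPN : ∀ q < k, P k q + (k+2) ≤ N k := by
    intro q hq
    have := N_eq k hk
    have := P_le_P (k := k) (show q ≤ k-1 by omega)
    omega
  -- each P k q ∈ Γ
  have hP : ∀ q < k, P k q ∈ Γ := by
    intro q hq
    have hPb : P k q + 1 ≤ N k := by have := hPN q hq; omega
    obtain ⟨j', hb', heq, p, hp, hp1, hp2⟩ := hA (P k q) 1 one_pos (by rw [hL]; exact hPb)
    rw [hL] at hb'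
    have hpt := ptwise_of_substr hPb hb' heq 0 one_pos
    simp only [Nat.add_zero] at hpt
    rw [f'_at_P hq] at hpt
    have hj'k : j' ≠ k := by
      intro hc
      rw [hc, f'_k] at hpt
      omega
    rw [f'_ne hj'k] at hpt
    have hj'e : j' = P k q := by
      obtain ⟨q2, hq2, he2, hv2⟩ := f_big (k := k) (i := j') (by omega) (by omega)
      have hqe : q2 = q := by omega
      subst hqe
      exact he2
    have : p = P k q := by omega
    rwa [← this]
  -- k ∈ Γ (the unique b)
  have hK : k ∈ Γ := by
    obtain ⟨j', hb', heq, p, hp, hp1, hp2⟩ := hA k 1 one_pos (by rw [hL]; omega)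
    rw [hL] at hb'
    have hpt := ptwise_of_substr (by omega) hb' heq 0 one_pos
    simp only [Nat.add_zero] at hpt
    rw [f'_k] at hpt
    have hj'k : j' = k := by
      by_contra hc
      rw [f'_ne hc] at hpt
      rcases f_cases k j' with h | h | h <;> omega
    have : p = k := by omega
    rwa [← this]
  -- an element in [k+1, 2k+1]
  have hE2 : ∃ e ∈ Γ, k+1 ≤ e ∧ e ≤ 2*k+1 := by
    obtain ⟨j', hb', heq, p, hp, hp1, hp2⟩ :=
      hA (k+1) (k+1) (by omega) (by rw [hL]; omega)
    rw [hL] at hb'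
    have hpt := ptwise_of_substr (by omega) hb' heq
    have hz : ∀ i < k+1, f' k (j'+i) = 0 := by
      intro i hi
      rw [hpt i hi, f'_ne (by omega), f_mid (by omega) (by omega)]
    have hj'e : j' = k+1 := by
      apply zero_run_gen hk (g := f' k) (by rw [f'_k]; omega)
        (fun q hq => by rw [f'_at_P hq]; omega)
        (fun q hq => by rw [f'_at_X hq]; omega) hb' hz
    subst hj'e
    exact ⟨p, hp, by omega, by omega⟩
  -- for each q < k, an element in (P k q, P k q + k + 2)
  have hEq : ∀ q, q < k → ∃ e, e ∈ Γ ∧ P k q + 1 ≤ e ∧ e < P k q + (k+2) := by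
    intro q hq
    have hPb := hPN q hq
    obtain ⟨j', hb', heq, p, hp, hp1, hp2⟩ :=
      hA (P k q + 1) (k+1) (by omega) (by rw [hL]; omega)
    rw [hL] at hb'
    have hpt := ptwise_of_substr (by omega) hb' heq
    have hw : ∀ i < k+1, f' k (P k q + 1 + i) = if 1 + i = k - q then 1 else 0 := by
      intro i hi
      have hgt : P k q + 1 + i ≠ k := by have := P_gt (k := k) (q := q); omega
      rw [f'_ne hgt, show P k q + 1 + i = P k q + (1+i) by omega,
        f_block hq (by omega), if_neg (by omega)]
    have h1 : f' k (j' + (k - q - 1)) = 1 := by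
      rw [hpt (k-q-1) (by omega), hw (k-q-1) (by omega), if_pos (by omega)]
    have hj'nk : j' + (k-q-1) ≠ k := by
      intro hc
      rw [hc, f'_k] at h1
      omega
    obtain ⟨m, hm, hXm⟩ : ∃ m < k, j' + (k-q-1) = X k m := by
      rw [f'_ne hj'nk] at h1
      rcases f_eq_one (by omega) h1 with h2 | h2
      · exact absurd h2 hj'nk
      · exact h2
    simp only [X] at hXm
    have hmq : m = q := by
      rcases Nat.lt_trichotomy m q with hlt | hEqq | hgt
      · exfalso
        have e : P k (m+1) = P k m + (k+2) := by simp only [P]; ring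
        have h2 := hpt (k+1+m-q) (by omega)
        rw [hw (k+1+m-q) (by omega), if_neg (by omega)] at h2
        rw [show j' + (k+1+m-q) = P k (m+1) by omega, f'_at_P (by omega)] at h2
        omega
      · exact hEqq
      · exfalso
        have h2 := hpt (m-q-1) (by omega)
        rw [hw (m-q-1) (by omega), if_neg (by omega)] at h2
        rw [show j' + (m-q-1) = P k m by omega, f'_at_P hm] at h2
        omega
    subst hmq
    have hj'e : j' = P k m + 1 := by omega
    subst hj'e
    exact ⟨p, hp, by omega, by omega⟩
  -- assemble 2k+2 distinct elements of Γ
  have hEq' : ∀ q, ∃ e, q < k → (e ∈ Γ ∧ P k q + 1 ≤ e ∧ e < P k q + (k+2)) := by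
    intro q
    by_cases hq : q < k
    · obtain ⟨e, he⟩ := hEq q hq
      exact ⟨e, fun _ => he⟩
    · exact ⟨0, fun hc => absurd hc hq⟩
  choose E hE using hEq'
  obtain ⟨e2, he2, he2a, he2b⟩ := hE2
  have hEbnd : ∀ q, q < k → P k q + 1 ≤ E q ∧ E q < P k q + (k+2) := fun q hq =>
    ⟨(hE q hq).2.1, (hE q hq).2.2⟩
  have hElt : ∀ a b, a < b → b < k → E a < P k b := by
    intro a b hab hb
    have h1 := hEbnd a (by omega)
    have h2 : P k (a+1) ≤ P k b := P_le_P (by omega)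
    have e : P k (a+1) = P k a + (k+2) := by simp only [P]; ring
    omega
  set S : Finset ℕ := insert k (insert e2
    (((Finset.range k).image (P k)) ∪ ((Finset.range k).image E))) with hS
  have hsub : S ⊆ Γ := by
    intro y hy
    simp only [hS, Finset.mem_insert, Finset.mem_union, Finset.mem_image,
      Finset.mem_range] at hy
    rcases hy with rfl | rfl | ⟨q, hq, rfl⟩ | ⟨q, hq, rfl⟩
    · exact hK
    · exact he2
    · exact hP q hq
    · exact (hE q hq).1
  have hcard : S.card = 2*k+2 := by
    have hdisj : Disjoint ((Finset.range k).image (P k)) ((Finset.range k).image E) := by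
      rw [Finset.disjoint_left]
      intro a ha hb
      simp only [Finset.mem_image, Finset.mem_range] at ha hb
      obtain ⟨q, hq, rfl⟩ := ha
      obtain ⟨q', hq', he⟩ := hb
      have h1 := hEbnd q' hq'
      rcases Nat.lt_trichotomy q' q with h2 | h2 | h2
      · have := hElt q' q h2 hq
        omega
      · subst h2; omega
      · have h3 : P k (q+1) ≤ P k q' := P_le_P (k := k) (show q+1 ≤ q' by omega)
        have e : P k (q+1) = P k q + (k+2) := by simp only [P]; ring
        omega
    have hEi : Set.InjOn E (Finset.range k) := by
      intro a ha b hb h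
      simp only [Finset.coe_range, Set.mem_Iio] at ha hb
      rcases Nat.lt_trichotomy a b with h2 | h2 | h2
      · exfalso
        have := hElt a b h2 hb
        have := hEbnd b hb
        omega
      · exact h2
      · exfalso
        have := hElt b a h2 ha
        have := hEbnd a ha
        omega
    have hu : (((Finset.range k).image (P k)) ∪ ((Finset.range k).image E)).card = 2*k := by
      rw [Finset.card_union_of_disjoint hdisj, Finset.card_image_of_injective _ (P_inj k),
        Finset.card_image_of_injOn hEi, Finset.card_range]
      omega
    have h1 : e2 ∉ ((Finset.range k).image (P k)) ∪ ((Finset.range k).image E) := by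
      simp only [Finset.mem_union, Finset.mem_image, Finset.mem_range]
      rintro (⟨q, hq, he⟩ | ⟨q, hq, he⟩)
      · have := P_gt (k := k) (q := q); omega
      · have := hEbnd q hq; have := P_gt (k := k) (q := q); omega
    have h2 : k ∉ insert e2 (((Finset.range k).image (P k)) ∪ ((Finset.range k).image E)) := by
      simp only [Finset.mem_insert, Finset.mem_union, Finset.mem_image, Finset.mem_range]
      rintro (h | ⟨q, hq, he⟩ | ⟨q, hq, he⟩)
      · omega
      · have := P_gt (k := k) (q := q); omega
      · have := hEbnd q hq; have := P_gt (k := k) (q := q); omega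
    rw [hS, Finset.card_insert_of_notMem h2, Finset.card_insert_of_notMem h1, hu]
  calc 2*k + 2 = S.card := hcard.symm
    _ ≤ Γ.card := Finset.card_le_card hsub

lemma gamma_T' {k : ℕ} (hk : 1 ≤ k) : gamma ((attrT k).set k 2) = 2*k + 2 := by
  apply le_antisymm
  · exact Nat.sInf_le ⟨GT' k, attr_T' hk, card_GT' hk⟩
  · refine le_csInf ⟨2*k+2, GT' k, attr_T' hk, card_GT' hk⟩ ?_
    rintro m ⟨Γ, hA, rfl⟩
    exact lower_T' hk hA

end Attr

/-- For the string `T = attrT k` (k ≥ 1) we have `γ(T) = k + 2`, whereas substituting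
the first occurrence of `x` (at position `k`, 0-indexed) by the fresh character `b = 2`
yields a string `T'` with `γ(T') = 2k + 2`; so a single substitution can (asymptotically)
double the smallest string attractor size. -/
theorem gamma_substitution_lower_bound (k : ℕ) (hk : 1 ≤ k) :
    gamma (attrT k) = k + 2 ∧ gamma ((attrT k).set k 2) = 2 * k + 2 :=
  ⟨Attr.gamma_T hk, Attr.gamma_T' hk⟩
end

section
/- For the smallest grammar size g*, a single character substitution at most doubles the grammar size: if T' is obtained from T by substituting one character, then g*(T') ≤ 2·g*(T). -/
namespace SLPSub

variable {α : Type*}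

/-- Canonical expansion of a rhs-family, with a guard making it total. -/
def expandF (r : ℕ → List (ℕ ⊕ α)) (x : ℕ) : List α :=
  ((r x).map (fun s => match s with
    | Sum.inl j => if _h : j < x then expandF r j else []
    | Sum.inr a => [a])).flatten
termination_by x

theorem expandF_eq {r : ℕ → List (ℕ ⊕ α)} {x : ℕ}
    (hwf : ∀ s ∈ r x, ∀ j : ℕ, s = Sum.inl j → j < x) :
    expandF r x = ((r x).map (Sum.elim (expandF r) fun a => [a])).flatten := by
  rw [expandF]
  congr 1
  apply List.map_congr_left
  intro s hs
  match s with
  | Sum.inl j => simp [hwf _ hs j rfl]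
  | Sum.inr a => rfl

theorem expandF_congr {r s : ℕ → List (ℕ ⊕ α)} (x : ℕ)
    (h : ∀ y ≤ x, r y = s y) : expandF r x = expandF s x := by
  induction x using Nat.strong_induction_on with
  | _ x ih =>
    rw [expandF, expandF, h x le_rfl]
    congr 1
    apply List.map_congr_left
    intro a _ha
    match a with
    | Sum.inr a => rfl
    | Sum.inl j =>
      simp only
      split
      · next hj => exact ih j hj fun y hy => h y (le_of_lt (lt_of_le_of_lt hy hj))
      · rfl

def locate : List ℕ → ℕ → ℕ × ℕ
  | [], p => (0, p)
  | l :: L, p =>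
    if p < l then (0, p)
    else ((locate L (p - l)).1 + 1, (locate L (p - l)).2)

theorem locate_spec : ∀ (L : List ℕ) (p : ℕ), p < L.sum →
    ∃ l, L[(locate L p).1]? = some l ∧ (locate L p).2 < l ∧
      (L.take (locate L p).1).sum + (locate L p).2 = p := by
  intro L
  induction L with
  | nil => intro p hp; simp at hp
  | cons l L ih =>
    intro p hp
    by_cases h : p < l
    · refine ⟨l, ?_, ?_, ?_⟩ <;> simp [locate, h]
    · obtain ⟨l', h1, h2, h3⟩ := ih (p - l) (by simp at hp; omega)
      refine ⟨l', ?_, ?_, ?_⟩ <;> simp [locate, h, h1, h2]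
      omega

theorem flatten_set (c : α) : ∀ (M : List (List α)) (t : ℕ) (m : List α) (q : ℕ),
    M[t]? = some m → q < m.length →
    (M.set t (m.set q c)).flatten
      = M.flatten.set (((M.take t).map List.length).sum + q) c := by
  intro M
  induction M with
  | nil => intro t m q hm; simp at hm
  | cons m0 M ih =>
    intro t m q hm hq
    match t with
    | 0 =>
      simp only [List.getElem?_cons_zero, Option.some.injEq] at hm
      subst hm
      simp [List.set_append_left _ _ hq]
    | Nat.succ t =>
      simp only [List.getElem?_cons_succ] at hm
      have := ih t m q hm hq
      simp only [List.set_cons_succ, List.flatten_cons, List.take_succ_cons,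
        List.map_cons, List.sum_cons, this]
      rw [Nat.add_assoc, List.set_append_right _ _ (Nat.le_add_right _ _)]
      simp

/-- expansion length of a symbol -/
def elen (r : ℕ → List (ℕ ⊕ α)) : (ℕ ⊕ α) → ℕ :=
  Sum.elim (fun j => (expandF r j).length) fun _ => 1

theorem elen_eq (r : ℕ → List (ℕ ⊕ α)) :
    (fun s => ((Sum.elim (expandF r) fun a => [a]) s).length) = elen r := by
  funext s; cases s <;> rfl

theorem expandF_length {r : ℕ → List (ℕ ⊕ α)} {x : ℕ}
    (hwf : ∀ s ∈ r x, ∀ j : ℕ, s = Sum.inl j → j < x) :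
    (expandF r x).length = ((r x).map (elen r)).sum := by
  rw [expandF_eq hwf, List.length_flatten, List.map_map]
  rw [show (List.length ∘ (Sum.elim (expandF r) fun a => [a])) = elen r from elen_eq r]

/-- The edited productions along the root-to-leaf path.  `prods r n c k p x` is the rhs of
primed nonterminal `x` produced while editing position `p` in the expansion of `k`. -/
def prods (r : ℕ → List (ℕ ⊕ α)) (n : ℕ) (c : α) : ℕ → ℕ → ℕ → List (ℕ ⊕ α)
  | k, p, x =>
    match (r k)[(locate ((r k).map (elen r)) p).1]? with
    | some (Sum.inl j) =>
        if _hj : j < k then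
          if x = n + k then
            (r k).set (locate ((r k).map (elen r)) p).1 (Sum.inl (n + j))
          else prods r n c j (locate ((r k).map (elen r)) p).2 x
        else []
    | some (Sum.inr _) =>
        if x = n + k then (r k).set (locate ((r k).map (elen r)) p).1 (Sum.inr c) else []
    | none => []
termination_by k => k

theorem prods_wf {r : ℕ → List (ℕ ⊕ α)} {n : ℕ} {c : α}
    (hwf : ∀ x, ∀ s ∈ r x, ∀ j : ℕ, s = Sum.inl j → j < x) :
    ∀ k p x, ∀ s ∈ prods r n c k p x, ∀ j : ℕ, s = Sum.inl j → j < x := by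
  intro k
  induction k using Nat.strong_induction_on with
  | _ k ih =>
    intro p x s hs j hj
    rw [prods] at hs
    split at hs
    · next j0 hget =>
      split at hs
      · next hj0 =>
        split at hs
        · next hx =>
          subst hx hj
          rcases List.mem_or_eq_of_mem_set hs with h | h
          · exact lt_of_lt_of_le (hwf k _ h j rfl) (Nat.le_add_left k n)
          · cases h; omega
        · exact ih j0 hj0 _ _ _ hs j hj
      · simp at hs
    · next hget =>
      split at hs
      · next hx =>
        subst hx hj
        rcases List.mem_or_eq_of_mem_set hs with h | h
        · exact lt_of_lt_of_le (hwf k _ h j rfl) (Nat.le_add_left k n)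
        · simp at h
      · simp at hs
    · simp at hs

theorem prods_length {r : ℕ → List (ℕ ⊕ α)} {n : ℕ} {c : α} :
    ∀ k p x, (prods r n c k p x).length ≤ (r (x - n)).length := by
  intro k
  induction k using Nat.strong_induction_on with
  | _ k ih =>
    intro p x
    rw [prods]
    split
    · next j0 hget =>
      split
      · next hj0 =>
        split
        · next hx => subst hx; simp
        · exact ih j0 hj0 _ _
      · simp
    · next hget =>
      split
      · next hx => subst hx; simp
      · simp
    · simp

theorem key {r : ℕ → List (ℕ ⊕ α)} {n : ℕ} {c : α}
    (hwf : ∀ x, ∀ s ∈ r x, ∀ j : ℕ, s = Sum.inl j → j < x)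
    (hnil : ∀ x, n ≤ x → r x = []) :
    ∀ k p, p < (expandF r k).length →
    ∀ R : ℕ → List (ℕ ⊕ α),
      (∀ x, x < n → R x = r x) →
      (∀ x, n ≤ x → x ≤ n + k → R x = prods r n c k p x) →
      expandF R (n + k) = (expandF r k).set p c := by
  intro k
  induction k using Nat.strong_induction_on with
  | _ k ih =>
    intro p hp R hR1 hR2
    have hk : k < n := by
      by_contra hk
      rw [expandF_eq (hwf k), hnil k (le_of_not_gt hk)] at hp
      simp at hp
    set t := (locate ((r k).map (elen r)) p).1 with ht
    set q := (locate ((r k).map (elen r)) p).2 with hq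
    have hp' : p < ((r k).map (elen r)).sum := by
      rw [← expandF_length (hwf k)]; exact hp
    obtain ⟨l, hget, hql, hsum⟩ := locate_spec _ _ hp'
    rw [List.getElem?_map] at hget
    obtain ⟨s, hs, hsl⟩ := Option.map_eq_some_iff.mp hget
    have hsmem : s ∈ r k := List.mem_of_getElem? hs
    have hRnk : R (n + k) = prods r n c k p (n + k) :=
      hR2 _ (Nat.le_add_right _ _) le_rfl
    have hwfR : ∀ s ∈ R (n + k), ∀ j : ℕ, s = Sum.inl j → j < n + k := by
      rw [hRnk]; exact prods_wf hwf k p (n + k)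
    have hmapR : ∀ s' ∈ r k,
        (Sum.elim (expandF R) fun a => [a]) s' = (Sum.elim (expandF r) fun a => [a]) s' := by
      intro s' hs'
      match s' with
      | Sum.inr a => rfl
      | Sum.inl j' =>
        have hj' : j' < k := hwf k _ hs' j' rfl
        exact expandF_congr j' fun y hy => hR1 y (by omega)
    have hMt : ((r k).map (Sum.elim (expandF r) fun a => [a]))[t]? =
        some ((Sum.elim (expandF r) fun a => [a]) s) := by
      rw [List.getElem?_map, hs]; rfl
    have hflat : expandF r k = ((r k).map (Sum.elim (expandF r) fun a => [a])).flatten :=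
      expandF_eq (hwf k)
    have htake : (((r k).map (Sum.elim (expandF r) fun a => [a])).take t).map List.length
        = ((r k).map (elen r)).take t := by
      rw [← List.map_take, ← List.map_take, List.map_map]
      exact List.map_congr_left fun s _ => by cases s <;> rfl
    match s, hs, hsl with
    | Sum.inl j, hs, hsl =>
      have hj : j < k := hwf k _ hsmem j rfl
      have hRnk' : R (n + k) = (r k).set t (Sum.inl (n + j)) := by
        rw [hRnk, prods, ← ht, hs]
        simp [hj]
      have hql' : q < (expandF r j).length := by
        rw [← hsl] at hql; exact hql
      have hsub : expandF R (n + j) = (expandF r j).set q c := by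
        refine ih j hj q hql' R hR1 ?_
        intro x hx1 hx2
        rw [hR2 x hx1 (by omega), prods, ← ht, hs]
        simp [hj, hq]
        intro hxk
        omega
      rw [expandF_eq (hwfR), hRnk', List.map_set, List.map_congr_left hmapR]
      have : (Sum.elim (expandF R) fun a => [a]) (Sum.inl (n + j)) = (expandF r j).set q c := hsub
      rw [this, hflat, flatten_set c _ t (expandF r j) q hMt hql', htake, hsum]
    | Sum.inr a, hs, hsl =>
      have hq0 : q = 0 := by
        rw [← hsl] at hql
        have h1 : elen r (Sum.inr a) = 1 := rfl
        omega
      have hRnk' : R (n + k) = (r k).set t (Sum.inr c) := by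
        rw [hRnk, prods, ← ht, hs]
        simp
      rw [expandF_eq (hwfR), hRnk', List.map_set, List.map_congr_left hmapR]
      have h1 : (Sum.elim (expandF R) fun a => [a]) (Sum.inr c)
          = (((Sum.elim (expandF r) fun a => [a]) (Sum.inr a)) : List α).set q c := by
        simp [hq0]
      rw [h1, hflat, flatten_set c _ t _ q hMt (by simp [hq0]), htake, hsum]

theorem flatten_singleton (l : List α) : (l.map fun a => [a]).flatten = l := by
  induction l <;> simp [*]

end SLPSub

/-- A straight-line program (grammar compression): nonterminals are `0, …, n-1`, each
with a single production whose right-hand side is a list of symbols (nonterminals or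
terminal characters), where nonterminal references point to strictly smaller indices. -/
structure SLP (α : Type*) where
  n : ℕ
  rhs : ℕ → List (ℕ ⊕ α)
  wf : ∀ i < n, ∀ s ∈ rhs i, ∀ j : ℕ, s = Sum.inl j → j < i

/-- The size of a grammar: total length of the right-hand sides of all productions. -/
def SLP.size {α : Type*} (G : SLP α) : ℕ :=
  (Finset.range G.n).sum fun i => (G.rhs i).length

/-- `G` generates exactly the string `T`: the expansion of the start symbol
(the last nonterminal) is `T`. -/
def SLP.Generates {α : Type*} (G : SLP α) (T : List α) : Prop :=
  0 < G.n ∧ ∃ expand : ℕ → List α,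
    (∀ i < G.n, expand i = ((G.rhs i).map (Sum.elim expand fun a => [a])).flatten) ∧
      expand (G.n - 1) = T

/-- `gStar T` is the size of a smallest grammar generating exactly `T`. -/
noncomputable def gStar {α : Type*} (T : List α) : ℕ :=
  sInf {m | ∃ G : SLP α, G.Generates T ∧ G.size = m}

/-- A single character substitution at most doubles the smallest grammar size:
if `T'` is obtained from `T` by substituting one character, then `g*(T') ≤ 2 · g*(T)`. -/
theorem gStar_substitution_le {α : Type*} (T : List α) (i : ℕ) (c : α)
    (hi : i < T.length) (hc : T[i]? ≠ some c) :
    gStar (T.set i c) ≤ 2 * gStar T := by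
  classical
  have hne : {m | ∃ G : SLP α, G.Generates T ∧ G.size = m}.Nonempty := by
    refine ⟨T.length, ⟨⟨1, fun _ => T.map Sum.inr, ?_⟩, ⟨Nat.one_pos, fun _ => T, ?_, rfl⟩, ?_⟩⟩
    · intro k _ s hs j hj
      subst hj; simp at hs
    · intro k _
      rw [List.map_map, Sum.elim_comp_inr, SLPSub.flatten_singleton]
    · simp [SLP.size]
  obtain ⟨G, hGen, hsz⟩ := Nat.sInf_mem hne
  obtain ⟨hn, expand, hexp, hroot⟩ := hGen
  set n := G.n with hnn
  set r : ℕ → List (ℕ ⊕ α) := fun x => if x < n then G.rhs x else [] with hr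
  have hwf : ∀ x, ∀ s ∈ r x, ∀ j : ℕ, s = Sum.inl j → j < x := by
    intro x s hs j hj
    by_cases h : x < n
    · simp only [hr, if_pos h] at hs; exact G.wf x h s hs j hj
    · simp [hr, h] at hs
  have hnil : ∀ x, n ≤ x → r x = [] := fun x h => by simp [hr, Nat.not_lt.mpr h]
  have hE : ∀ x, x < n → SLPSub.expandF r x = expand x := by
    intro x
    induction x using Nat.strong_induction_on with
    | _ x ih =>
      intro hx
      rw [SLPSub.expandF_eq (hwf x), hexp x hx]
      have hrx : r x = G.rhs x := by simp [hr, hx]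
      rw [hrx]
      congr 1
      apply List.map_congr_left
      intro s hs
      match s with
      | Sum.inr a => rfl
      | Sum.inl j =>
        have hj : j < x := G.wf x hx (Sum.inl j) hs j rfl
        simp only [Sum.elim_inl]
        exact ih j hj (lt_trans hj hx)
  have hroot' : SLPSub.expandF r (n - 1) = T := by
    rw [hE (n - 1) (by omega), hroot]
  set rhs' : ℕ → List (ℕ ⊕ α) :=
    fun x => if x < n then G.rhs x else SLPSub.prods r n c (n - 1) i x with hrhs'
  have hwf' : ∀ x, ∀ s ∈ rhs' x, ∀ j : ℕ, s = Sum.inl j → j < x := by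
    intro x s hs j hj
    by_cases h : x < n
    · simp only [hrhs', if_pos h] at hs; exact G.wf x h s hs j hj
    · simp only [hrhs', if_neg h] at hs; exact SLPSub.prods_wf hwf _ _ _ s hs j hj
  set G' : SLP α := ⟨n + n, rhs', fun x _ => hwf' x⟩ with hG'
  have hGen' : G'.Generates (T.set i c) := by
    refine ⟨by simp [hG']; omega, SLPSub.expandF rhs', ?_, ?_⟩
    · intro x _; exact SLPSub.expandF_eq (hwf' x)
    · have h1 : G'.n - 1 = n + (n - 1) := by simp [hG']; omega
      have hkey := SLPSub.key (c := c) hwf hnil (n - 1) i (by rw [hroot']; exact hi) rhs'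
        (fun x hx => by simp [hrhs', hx, hr])
        (fun x hx1 _ => by simp [hrhs', Nat.not_lt.mpr hx1])
      rw [h1, hkey, hroot']
  have hsize : G'.size ≤ 2 * G.size := by
    have h2 : G'.size = (Finset.range n).sum (fun x => (G.rhs x).length)
        + (Finset.range n).sum fun x => (rhs' (n + x)).length := by
      show (Finset.range (n + n)).sum (fun x => (rhs' x).length) = _
      rw [Finset.sum_range_add]
      congr 1
      apply Finset.sum_congr rfl
      intro x hx
      simp only [Finset.mem_range] at hx
      simp [hrhs', hx]
    rw [h2, two_mul]
    have h3 : G.size = (Finset.range n).sum fun x => (G.rhs x).length := rfl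
    rw [h3]
    refine Nat.add_le_add le_rfl (Finset.sum_le_sum ?_)
    intro x hx
    simp only [Finset.mem_range] at hx
    have h4 : rhs' (n + x) = SLPSub.prods r n c (n - 1) i (n + x) := by
      simp [hrhs']
    rw [h4]
    calc (SLPSub.prods r n c (n - 1) i (n + x)).length ≤ (r (n + x - n)).length :=
          SLPSub.prods_length _ _ _
      _ = (G.rhs x).length := by simp [hr, hx]
  calc gStar (T.set i c) ≤ G'.size := Nat.sInf_le ⟨G', hGen', rfl⟩
    _ ≤ 2 * G.size := hsize
    _ = 2 * gStar T := by rw [hsz]; rfl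
end
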